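/- arXiv:1209.6007 — 6 statements merged into one kernel-verified Lean document; each statement's English description precedes it below -/
import Mathlib

section
/- If v is a side vertex of a graph G, i.e., the subgraph induced by the neighborhood of v is a clique, then v is internal to no shortest path between any two vertices s, t distinct from v. Consequently the betweenness centrality of a side vertex is zero. -/
open SimpleGraph

/-- Number of shortest `s`–`t` paths in `G`. -/
noncomputable def sigmaP {V : Type} (G : SimpleGraph V) (s t : V) : ℕ :=
  Nat.card {p : G.Walk s t // p.IsPath ∧ p.length = G.dist s t}

/-- Number of shortest `s`–`t` paths in `G` having `v` as an internal vertex. -/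
noncomputable def sigmaThr {V : Type} (G : SimpleGraph V) (s t v : V) : ℕ :=
  Nat.card {p : G.Walk s t // p.IsPath ∧ p.length = G.dist s t ∧
    v ∈ p.support ∧ v ≠ s ∧ v ≠ t}

/-- Betweenness centrality (division by zero gives 0, so only pairs with
`sigmaP G s t > 0` contribute). -/
noncomputable def bc {V : Type} (G : SimpleGraph V) [Fintype V] (v : V) : ℚ :=
  ∑ s, ∑ t, (sigmaThr G s t v : ℚ) / (sigmaP G s t : ℚ)

theorem side_vertex_bc_zero {V : Type} [Fintype V] (G : SimpleGraph V) (v : V)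
    (hside : (G.neighborSet v).Pairwise G.Adj) :
    (∀ s t : V, s ≠ v → t ≠ v → ∀ p : G.Walk s t, p.IsPath →
      p.length = G.dist s t → v ∉ p.support) ∧ bc G v = 0 := by
  have key : ∀ s t : V, s ≠ v → t ≠ v → ∀ p : G.Walk s t, p.IsPath →
      p.length = G.dist s t → v ∉ p.support := by
    intro s t hs ht p hp hl hv
    classical
    set q := p.takeUntil v hv with hq
    set r := p.dropUntil v hv with hr
    have hspec : q.append r = p := p.take_spec hv
    -- decompose q from the end
    obtain ⟨a, hva, q1, hq1⟩ := Walk.exists_eq_cons_of_ne (Ne.symm hs) q.reverse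
    obtain ⟨b, hvb, r1, hr1⟩ := Walk.exists_eq_cons_of_ne (Ne.symm ht) r
    have hqeq : q = q1.reverse.append (Walk.cons hva.symm Walk.nil) := by
      have := congrArg Walk.reverse hq1
      rw [Walk.reverse_reverse] at this
      rw [this, Walk.reverse_cons]
    have hqlen : q.length = q1.length + 1 := by
      have := congrArg Walk.length hq1
      simpa using this
    have hrlen : r.length = r1.length + 1 := by
      simp [hr1]
    have haq : a ∈ q.support := by
      have : a ∈ q.reverse.support := by
        rw [hq1]; simp
      simpa using this
    by_cases hab : a = b
    · -- v appears with same neighbor on both sides: contradicts Nodup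
      have hnodup : (q.append r).support.Nodup := by rw [hspec]; exact hp.support_nodup
      rw [Walk.support_append] at hnodup
      have hdisj := (List.nodup_append'.mp hnodup).2.2
      have hbr : b ∈ r.support.tail := by
        rw [hr1]; simp
      exact hdisj haq (hab ▸ hbr)
    · have hadj : G.Adj a b := hside (by simpa using hva) (by simpa using hvb) hab
      have w : G.Walk s t := q1.reverse.append (Walk.cons hadj r1)
      have hdl : G.dist s t ≤ (q1.reverse.append (Walk.cons hadj r1)).length :=
        SimpleGraph.dist_le _
      have hwlen : (q1.reverse.append (Walk.cons hadj r1)).length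
          = q1.length + r1.length + 1 := by
        simp [Walk.length_append]; omega
      have hplen : p.length = q.length + r.length := by
        rw [← hspec, Walk.length_append]
      omega
  constructor
  · exact key
  · have hz : ∀ s t : V, sigmaThr G s t v = 0 := by
      intro s t
      rw [sigmaThr, Nat.card_eq_zero]
      left
      constructor
      rintro ⟨p, hp, hl, hv, hvs, hvt⟩
      exact key s t (Ne.symm hvs) (Ne.symm hvt) p hp hl hv
    simp [bc, hz]
end

section
/- Let u, v, s, t be vertices of a connected graph G such that every shortest s–t path passes through u, with u ∉ {s,t}. Then σ_{st} = σ_{su} · σ_{ut}, i.e., the number of shortest s–t paths is the product of the number of shortest s–u paths and the number of shortest u–t paths. -/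
open SimpleGraph

section Aux

variable {V : Type} [DecidableEq V] {G : SimpleGraph V}

private lemma takeUntil_start' {u t : V} (q : G.Walk u t) (h : u ∈ q.support) :
    q.takeUntil u h = Walk.nil := by
  cases q with
  | nil => rfl
  | cons e p => simp [Walk.takeUntil]

private lemma takeUntil_append_eq' {s u t : V} (p : G.Walk s u) (q : G.Walk u t)
    (hp : (p.append q).IsPath) (hm : u ∈ (p.append q).support) :
    (p.append q).takeUntil u hm = p := by
  induction p with
  | nil => exact takeUntil_start' q hm
  | @cons a b c e p' ih =>
      rw [Walk.cons_append, Walk.cons_isPath_iff] at hp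
      have hau : a ≠ c := by
        rintro rfl
        exact hp.2 (by rw [Walk.mem_support_append_iff]; exact Or.inl p'.end_mem_support)
      show (Walk.cons e (p'.append q)).takeUntil c hm = _
      simp only [Walk.takeUntil, dif_neg hau]
      rw [ih q hp.1 _]

omit [DecidableEq V] in
private lemma append_left_cancel' {s u t : V} (p : G.Walk s u) {q q' : G.Walk u t}
    (h : p.append q = p.append q') : q = q' := by
  induction p with
  | nil => simpa using h
  | cons e p' ih =>
      rw [Walk.cons_append, Walk.cons_append] at h
      exact ih (by simpa using h)

private lemma dropUntil_append_eq' {s u t : V} (p : G.Walk s u) (q : G.Walk u t)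
    (hp : (p.append q).IsPath) (hm : u ∈ (p.append q).support) :
    (p.append q).dropUntil u hm = q := by
  have h1 := Walk.take_spec (p.append q) hm
  rw [takeUntil_append_eq' p q hp hm] at h1
  exact append_left_cancel' p h1

end Aux

theorem sigma_mul_through_cut_vertex {V : Type} (G : SimpleGraph V)
    (hconn : G.Connected) (u s t : V) (hus : u ≠ s) (hut : u ≠ t)
    (h : ∀ p : G.Walk s t, p.IsPath → p.length = G.dist s t → u ∈ p.support) :
    sigmaP G s t = sigmaP G s u * sigmaP G u t := by
  classical
  have hsplit : ∀ (p : G.Walk s t) (hm : u ∈ p.support),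
      (p.takeUntil u hm).length + (p.dropUntil u hm).length = p.length := by
    intro p hm
    have := congrArg Walk.length (p.take_spec hm)
    rwa [Walk.length_append] at this
  have hdist : G.dist s t = G.dist s u + G.dist u t := by
    obtain ⟨w, hw⟩ := hconn.exists_walk_length_eq_dist s t
    have hwp := w.isPath_of_length_eq_dist hw
    have hu0 := h w hwp hw
    have h1 : G.dist s u ≤ (w.takeUntil u hu0).length := dist_le _
    have h2 : G.dist u t ≤ (w.dropUntil u hu0).length := dist_le _
    have h3 := hsplit w hu0
    have h4 := hconn.dist_triangle (u := s) (v := u) (w := t)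
    omega
  have hlen : ∀ (p : G.Walk s t) (hp : p.IsPath) (hl : p.length = G.dist s t),
      (p.takeUntil u (h p hp hl)).length = G.dist s u ∧
      (p.dropUntil u (h p hp hl)).length = G.dist u t := by
    intro p hp hl
    have h1 : G.dist s u ≤ (p.takeUntil u (h p hp hl)).length := dist_le _
    have h2 : G.dist u t ≤ (p.dropUntil u (h p hp hl)).length := dist_le _
    have h3 := hsplit p (h p hp hl)
    omega
  rw [sigmaP, sigmaP, sigmaP, ← Nat.card_prod]
  apply Nat.card_congr
  refine
    { toFun := fun p =>
        (⟨p.1.takeUntil u (h p.1 p.2.1 p.2.2),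
          p.2.1.takeUntil _, (hlen p.1 p.2.1 p.2.2).1⟩,
         ⟨p.1.dropUntil u (h p.1 p.2.1 p.2.2),
          p.2.1.dropUntil _, (hlen p.1 p.2.1 p.2.2).2⟩),
      invFun := fun pq => ⟨pq.1.1.append pq.2.1, ?_, ?_⟩,
      left_inv := fun p => Subtype.ext (Walk.take_spec _ _),
      right_inv := fun pq => ?_ }
  · exact Walk.isPath_of_length_eq_dist _ (by
      rw [Walk.length_append, pq.1.2.2, pq.2.2.2, hdist])
  · rw [Walk.length_append, pq.1.2.2, pq.2.2.2, hdist]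
  · have hpath : (pq.1.1.append pq.2.1).IsPath :=
      Walk.isPath_of_length_eq_dist _ (by
        rw [Walk.length_append, pq.1.2.2, pq.2.2.2, hdist])
    exact Prod.ext
      (Subtype.ext (takeUntil_append_eq' pq.1.1 pq.2.1 hpath _))
      (Subtype.ext (dropUntil_append_eq' pq.1.1 pq.2.1 hpath _))
end

section
/- Let v be a side vertex of a connected graph G (the neighborhood Γ(v) induces a clique), and let G' = G − v. Then for all s, t ∈ V \ {v}, the distance between s and t in G' equals the distance in G, and the number of shortest s–t paths is unchanged: σ'_{st} = σ_{st}. -/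
open SimpleGraph

namespace SideAux

variable {V : Type} (G : SimpleGraph V) (v : V)

/-- Lift a walk avoiding `v` into the induced subgraph on `{w | w ≠ v}`. -/
def liftW : ∀ {s t : V} (p : G.Walk s t) (hs : s ≠ v) (ht : t ≠ v),
    v ∉ p.support → (G.induce {w : V | w ≠ v}).Walk ⟨s, hs⟩ ⟨t, ht⟩
  | _, _, .nil, _, _, _ => .nil
  | _, _, .cons h p, hs, ht, hp =>
      .cons (by exact h)
        (liftW p
          (fun hw => hp (by
            subst hw
            exact List.mem_cons_of_mem _ p.start_mem_support))
          ht
          (fun hv => hp (List.mem_cons_of_mem _ hv)))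

lemma liftW_map : ∀ {s t : V} (p : G.Walk s t) (hs : s ≠ v) (ht : t ≠ v)
    (hp : v ∉ p.support),
    (liftW G v p hs ht hp).map (SimpleGraph.Embedding.induce {w : V | w ≠ v}).toHom = p
  | _, _, .nil, _, _, _ => by simp [liftW]
  | _, _, .cons h p, hs, ht, hp => by
      exact congrArg (SimpleGraph.Walk.cons h) (liftW_map p _ ht _)

lemma shortcut {V : Type} {G : SimpleGraph V} {v : V}
    (hside : (G.neighborSet v).Pairwise G.Adj) :
    ∀ (n : ℕ) {s t : V} (p : G.Walk s t), p.length = n → s ≠ v → t ≠ v →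
      ∃ q : G.Walk s t, v ∉ q.support ∧ q.length ≤ p.length ∧
        (v ∈ p.support → q.length < p.length) := by
  intro n
  induction n using Nat.strong_induction_on with
  | _ n ih =>
    intro s t p hn hs ht
    cases p with
    | nil =>
      exact ⟨.nil, by simp [Ne.symm hs], le_refl _, by simp [Ne.symm hs]⟩
    | cons h p' =>
      rename_i w
      by_cases hw : w = v
      · have hw' : v = w := hw.symm
        subst hw'
        cases p' with
        | nil => exact absurd rfl ht
        | cons h2 p'' =>
          rename_i b
          have hb : b ≠ v := fun hbv => G.irrefl (hbv ▸ h2)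
          obtain ⟨q'', hq1, hq2, _⟩ :=
            ih p''.length (by simp at hn; omega) p'' rfl hb ht
          by_cases hsb : s = b
          · subst hsb
            exact ⟨q'', hq1, by simp; omega, fun _ => by simp; omega⟩
          · have hadj : G.Adj s b := hside (by exact h.symm) (by exact h2) hsb
            refine ⟨.cons hadj q'', ?_, by simp; omega, fun _ => by simp; omega⟩
            intro hv
            rcases List.mem_cons.mp (by simpa using hv) with h' | h'
            · exact hs h'.symm
            · exact hq1 h'
      · obtain ⟨q', hq1, hq2, hq3⟩ := ih p'.length (by simp at hn; omega) p' rfl hw ht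
        refine ⟨.cons h q', ?_, by simp; omega, ?_⟩
        · intro hv
          rcases List.mem_cons.mp (by simpa using hv) with h' | h'
          · exact hs h'.symm
          · exact hq1 h'
        · intro hv
          have hv' : v ∈ p'.support := by
            rcases List.mem_cons.mp (by simpa using hv) with h' | h'
            · exact absurd h'.symm hs
            · exact h'
          have := hq3 hv'
          simp; omega

lemma avoid {V : Type} {G : SimpleGraph V} {v : V}
    (hside : (G.neighborSet v).Pairwise G.Adj) {s t : V} (p : G.Walk s t)
    (hlen : p.length = G.dist s t) (hs : s ≠ v) (ht : t ≠ v) : v ∉ p.support := by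
  intro hv
  obtain ⟨q, _, _, hq3⟩ := shortcut hside p.length p rfl hs ht
  have := SimpleGraph.dist_le q
  have := hq3 hv
  omega

end SideAux

theorem side_vertex_removal_preserves {V : Type} (G : SimpleGraph V)
    (hconn : G.Connected) (v : V)
    (hside : (G.neighborSet v).Pairwise G.Adj) :
    ∀ (s t : V) (hs : s ≠ v) (ht : t ≠ v),
      (G.induce {w : V | w ≠ v}).dist ⟨s, hs⟩ ⟨t, ht⟩ = G.dist s t ∧
      sigmaP (G.induce {w : V | w ≠ v}) ⟨s, hs⟩ ⟨t, ht⟩ = sigmaP G s t := by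
  intro s t hs ht
  set ι := (SimpleGraph.Embedding.induce {w : V | w ≠ v} (G := G)) with hι
  obtain ⟨p, hpl⟩ := hconn.exists_walk_length_eq_dist s t
  have hpav : v ∉ p.support := SideAux.avoid hside p hpl hs ht
  set q := SideAux.liftW G v p hs ht hpav with hq
  have hqlen : q.length = p.length := by
    rw [← SimpleGraph.Walk.length_map (f := ι.toHom), hq, SideAux.liftW_map]
    rfl
  have h1 : (G.induce {w : V | w ≠ v}).dist ⟨s, hs⟩ ⟨t, ht⟩ ≤ G.dist s t := by
    have := SimpleGraph.dist_le q
    omega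
  have hreach : (G.induce {w : V | w ≠ v}).Reachable ⟨s, hs⟩ ⟨t, ht⟩ := ⟨q⟩
  obtain ⟨r, hrl⟩ := hreach.exists_walk_length_eq_dist
  have h2 : G.dist s t ≤ (G.induce {w : V | w ≠ v}).dist ⟨s, hs⟩ ⟨t, ht⟩ := by
    have h3 : G.dist s t ≤ (r.map ι.toHom).length := by
      exact SimpleGraph.dist_le (r.map ι.toHom)
    rw [SimpleGraph.Walk.length_map] at h3
    omega
  have hdist : (G.induce {w : V | w ≠ v}).dist ⟨s, hs⟩ ⟨t, ht⟩ = G.dist s t := by omega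
  refine ⟨hdist, ?_⟩
  have hinj : Function.Injective ι.toHom := ι.injective
  let f : {q : (G.induce {w : V | w ≠ v}).Walk ⟨s, hs⟩ ⟨t, ht⟩ //
        q.IsPath ∧ q.length = (G.induce {w : V | w ≠ v}).dist ⟨s, hs⟩ ⟨t, ht⟩} →
      {p : G.Walk s t // p.IsPath ∧ p.length = G.dist s t} :=
    fun q => ⟨q.1.map ι.toHom,
      SimpleGraph.Walk.map_isPath_of_injective hinj q.2.1,
      by exact (SimpleGraph.Walk.length_map _ _).trans (q.2.2.trans hdist)⟩
  have hf : Function.Bijective f := by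
    constructor
    · intro a b hab
      exact Subtype.ext (SimpleGraph.Walk.map_injective_of_injective hinj _ _
        (congrArg Subtype.val hab))
    · rintro ⟨p', hp1, hp2⟩
      have hav : v ∉ p'.support := SideAux.avoid hside p' hp2 hs ht
      refine ⟨⟨SideAux.liftW G v p' hs ht hav, ?_, ?_⟩, ?_⟩
      · apply SimpleGraph.Walk.IsPath.of_map (f := ι.toHom)
        rw [SideAux.liftW_map]
        exact hp1
      · have : ((SideAux.liftW G v p' hs ht hav).map ι.toHom).length = p'.length := by
          rw [SideAux.liftW_map]
          rfl
        rw [SimpleGraph.Walk.length_map] at this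
        rw [this, hp2, hdist]
      · exact Subtype.ext (SideAux.liftW_map G v p' hs ht hav)
  unfold sigmaP
  exact Nat.card_congr (Equiv.ofBijective f hf)
end

section
/- Brandes' recursion: for a fixed source s in a connected unweighted graph G, the accumulated dependency δ_s(v) = Σ_{t∈V} σ_{st}(v)/σ_{st} satisfies δ_s(v) = Σ_{u : v ∈ P_s(u)} (σ_{sv}/σ_{su}) · (1 + δ_s(u)), where P_s(u) = { w ∈ V : {u,w} ∈ E and d_s(u) = d_s(w) + 1 } is the set of predecessors of u in the shortest-path DAG rooted at s. -/
open SimpleGraph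

/-- Number of walks `w → t` of length `dist s t - dist s w` (suffix counts). -/
noncomputable def Tcard {V : Type} (G : SimpleGraph V) (s w t : V) : ℕ :=
  Nat.card {q : G.Walk w t // G.dist s w + q.length = G.dist s t}

section BrandesAux
set_option linter.unusedSectionVars false
set_option maxHeartbeats 1000000
variable {V : Type} [Fintype V] (G : SimpleGraph V) [DecidableRel G.Adj]

lemma finite_cond_walk {a b : V} (P : G.Walk a b → Prop) (n : ℕ)
    (h : ∀ p, P p → p.length = n) : Finite {p : G.Walk a b // P p} := by
  classical
  exact Finite.of_injective
    (fun q => (⟨q.1, h q.1 q.2⟩ : {p : G.Walk a b // p.length = n}))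
    (by intro x y hxy; ext; simpa [Subtype.ext_iff] using hxy)

lemma walk_append_cancel {u v w : V} {a a' : G.Walk u v} {b b' : G.Walk v w}
    (hl : a.length = a'.length) (h : a.append b = a'.append b') : a = a' ∧ b = b' := by
  induction a with
  | nil =>
    cases a' with
    | nil => simpa using h
    | cons h' p => simp at hl
  | cons hadj p ih =>
    cases a' with
    | nil => simp at hl
    | cons hadj' p' =>
      rw [Walk.cons_append, Walk.cons_append] at h
      injection h with h1 h2 h3 p_eq
      subst h2
      simp only [Walk.length_cons, add_left_inj] at hl
      obtain ⟨rfl, rfl⟩ := ih hl (eq_of_heq p_eq)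
      exact ⟨rfl, rfl⟩

lemma split_card (hconn : G.Connected) (s v t : V) :
    Nat.card {p : G.Walk s t // p.length = G.dist s t ∧ v ∈ p.support}
      = Nat.card {p : G.Walk s v // p.length = G.dist s v}
        * Nat.card {q : G.Walk v t // G.dist s v + q.length = G.dist s t} := by
  classical
  haveI hF1 : Finite {p : G.Walk s t // p.length = G.dist s t ∧ v ∈ p.support} :=
    finite_cond_walk G _ (G.dist s t) (fun p hp => hp.1)
  haveI hF2 : Finite {p : G.Walk s v // p.length = G.dist s v} :=
    finite_cond_walk G _ (G.dist s v) (fun p hp => hp)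
  haveI hF3 : Finite {q : G.Walk v t // G.dist s v + q.length = G.dist s t} :=
    finite_cond_walk G _ (G.dist s t - G.dist s v) (fun p hp => by omega)
  rw [← Nat.card_prod]
  have key : ∀ (p : G.Walk s t) (hlen : p.length = G.dist s t) (hmem : v ∈ p.support),
      (p.takeUntil v hmem).length = G.dist s v ∧
        G.dist s v + (p.dropUntil v hmem).length = G.dist s t := by
    intro p hlen hmem
    have hab : (p.takeUntil v hmem).append (p.dropUntil v hmem) = p := p.take_spec hmem
    have hsum : (p.takeUntil v hmem).length + (p.dropUntil v hmem).length = p.length := by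
      conv_rhs => rw [← hab]
      rw [Walk.length_append]
    have h1 : G.dist s v ≤ (p.takeUntil v hmem).length := dist_le _
    have h2 : G.dist v t ≤ (p.dropUntil v hmem).length := dist_le _
    have h3 : G.dist s t ≤ G.dist s v + G.dist v t := hconn.dist_triangle
    omega
  apply le_antisymm
  · apply Nat.card_le_card_of_injective
      (fun x => ((⟨x.1.takeUntil v x.2.2, (key x.1 x.2.1 x.2.2).1⟩ :
          {p : G.Walk s v // p.length = G.dist s v}),
        (⟨x.1.dropUntil v x.2.2, (key x.1 x.2.1 x.2.2).2⟩ :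
          {q : G.Walk v t // G.dist s v + q.length = G.dist s t})))
    intro x y hxy
    simp only [Prod.mk.injEq, Subtype.mk.injEq] at hxy
    ext1
    rw [← x.1.take_spec x.2.2, ← y.1.take_spec y.2.2, hxy.1, hxy.2]
  · apply Nat.card_le_card_of_injective
      (fun x => (⟨x.1.1.append x.2.1, by
        constructor
        · rw [Walk.length_append]
          have := x.1.2; have := x.2.2; omega
        · rw [Walk.mem_support_append_iff]
          exact Or.inl (Walk.end_mem_support _)⟩ :
        {p : G.Walk s t // p.length = G.dist s t ∧ v ∈ p.support}))
    intro x y hxy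
    simp only [Subtype.mk.injEq] at hxy
    have hl : x.1.1.length = y.1.1.length := by
      have := x.1.2; have := y.1.2; omega
    obtain ⟨h1, h2⟩ := walk_append_cancel G hl hxy
    ext <;> simp [h1, h2]

lemma nat_card_sigma {ι : Type} [Fintype ι] (β : ι → Type) [∀ i, Finite (β i)] :
    Nat.card (Σ i, β i) = ∑ i, Nat.card (β i) := by
  letI : ∀ i, Fintype (β i) := fun i => Fintype.ofFinite _
  simp [Nat.card_eq_fintype_card, Fintype.card_sigma]

lemma step_card (hconn : G.Connected) (s v t : V) (hvt : v ≠ t) :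
    Nat.card {q : G.Walk v t // G.dist s v + q.length = G.dist s t}
      = ∑ u : V, Nat.card {q : G.Walk u t //
          (G.Adj v u ∧ G.dist s u = G.dist s v + 1) ∧ G.dist s u + q.length = G.dist s t} := by
  classical
  haveI hF1 : Finite {q : G.Walk v t // G.dist s v + q.length = G.dist s t} :=
    finite_cond_walk G _ (G.dist s t - G.dist s v) (fun p hp => by omega)
  haveI hF2 : ∀ u : V, Finite {q : G.Walk u t //
      (G.Adj v u ∧ G.dist s u = G.dist s v + 1) ∧ G.dist s u + q.length = G.dist s t} :=
    fun u => finite_cond_walk G _ (G.dist s t - G.dist s u) (fun p hp => by omega)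
  rw [← nat_card_sigma]
  have key : ∀ (q : G.Walk v t), G.dist s v + q.length = G.dist s t → ∀ hn : ¬ q.Nil,
      (G.Adj v (q.getVert 1) ∧ G.dist s (q.getVert 1) = G.dist s v + 1) ∧
        G.dist s (q.getVert 1) + q.tail.length = G.dist s t := by
    intro q hq hn
    have hadj : G.Adj v (q.getVert 1) := q.adj_snd hn
    have htl : q.tail.length + 1 = q.length := Walk.length_tail_add_one hn
    have h1 : G.dist s (q.getVert 1) ≤ G.dist s v + 1 := by
      obtain ⟨w, hw⟩ := hconn.exists_walk_length_eq_dist s v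
      have := dist_le (w.concat hadj)
      rwa [Walk.length_concat, hw] at this
    have h2 : G.dist s t ≤ G.dist s (q.getVert 1) + q.tail.length := by
      obtain ⟨w, hw⟩ := hconn.exists_walk_length_eq_dist s (q.getVert 1)
      have := dist_le (w.append q.tail)
      rwa [Walk.length_append, hw] at this
    refine ⟨⟨hadj, ?_⟩, ?_⟩ <;> omega
  have hnn : ∀ q : G.Walk v t, ¬ q.Nil := by
    intro q hq
    exact hvt (Walk.eq_of_length_eq_zero (Walk.nil_iff_length_eq.mp hq))
  apply le_antisymm
  · apply Nat.card_le_card_of_injective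
      (fun x => (⟨x.1.getVert 1, ⟨x.1.tail, key x.1 x.2 (hnn x.1)⟩⟩ :
        Σ u : V, {q : G.Walk u t //
          (G.Adj v u ∧ G.dist s u = G.dist s v + 1) ∧ G.dist s u + q.length = G.dist s t}))
    intro x y hxy
    have hc := congrArg (fun z : (Σ u : V, {q : G.Walk u t //
        (G.Adj v u ∧ G.dist s u = G.dist s v + 1) ∧ G.dist s u + q.length = G.dist s t}) =>
      Walk.cons z.2.2.1.1 z.2.1) hxy
    simp only at hc
    ext1
    rw [← Walk.cons_tail_eq x.1 (hnn x.1), ← Walk.cons_tail_eq y.1 (hnn y.1)]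
    exact hc
  · apply Nat.card_le_card_of_injective
      (fun x => (⟨Walk.cons x.2.2.1.1 x.2.1, by
          have h1 := x.2.2.1.2
          have h2 := x.2.2.2
          rw [Walk.length_cons]
          omega⟩ :
        {q : G.Walk v t // G.dist s v + q.length = G.dist s t}))
    intro x y hxy
    simp only [Subtype.mk.injEq] at hxy
    obtain ⟨u, q, hq⟩ := x
    obtain ⟨u', q', hq'⟩ := y
    simp only at hxy
    injection hxy with h1 h2 h3 p_eq
    cases h2
    simp only [Sigma.mk.inj_iff, heq_eq_eq, Subtype.mk.injEq]
    exact ⟨trivial, eq_of_heq p_eq⟩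

lemma sigmaP_eq_card (s t : V) :
    sigmaP G s t = Nat.card {p : G.Walk s t // p.length = G.dist s t} :=
  Nat.card_congr (Equiv.subtypeEquivRight (fun p =>
    ⟨fun h => h.2, fun h => ⟨p.isPath_of_length_eq_dist h, h⟩⟩))

lemma sigmaP_pos (hconn : G.Connected) (s t : V) : 0 < sigmaP G s t := by
  haveI : Finite {p : G.Walk s t // p.IsPath ∧ p.length = G.dist s t} :=
    finite_cond_walk G _ (G.dist s t) (fun p hp => hp.2)
  obtain ⟨p, hp1, hp2⟩ := hconn.exists_path_of_dist s t
  haveI : Nonempty {p : G.Walk s t // p.IsPath ∧ p.length = G.dist s t} := ⟨⟨p, hp1, hp2⟩⟩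
  exact Nat.card_pos

lemma Tcard_self (s u : V) : Tcard G s u u = 1 := by
  haveI : Nonempty {q : G.Walk u u // G.dist s u + q.length = G.dist s u} :=
    ⟨⟨Walk.nil, by simp⟩⟩
  haveI : Subsingleton {q : G.Walk u u // G.dist s u + q.length = G.dist s u} := by
    constructor
    rintro ⟨a, ha⟩ ⟨b, hb⟩
    have ha0 : a.length = 0 := by omega
    have hb0 : b.length = 0 := by omega
    ext1
    show a = b
    rw [(Walk.length_eq_zero_iff.mp ha0).eq_nil, (Walk.length_eq_zero_iff.mp hb0).eq_nil]
  exact Nat.card_unique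

lemma Tcard_succ_zero (s u v : V) (h : G.dist s u = G.dist s v + 1) :
    Tcard G s u v = 0 := by
  haveI : IsEmpty {q : G.Walk u v // G.dist s u + q.length = G.dist s v} := by
    constructor
    rintro ⟨q, hq⟩
    omega
  exact Nat.card_of_isEmpty

lemma sigmaThr_diag (s t : V) : sigmaThr G s t t = 0 := by
  haveI : IsEmpty {p : G.Walk s t // p.IsPath ∧ p.length = G.dist s t ∧
      t ∈ p.support ∧ t ≠ s ∧ t ≠ t} := by
    constructor
    rintro ⟨p, -, -, -, -, h⟩
    exact h rfl
  exact Nat.card_of_isEmpty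

lemma sigmaThr_eq_mul (hconn : G.Connected) (s w t : V) (hws : w ≠ s) (hwt : w ≠ t) :
    sigmaThr G s t w = sigmaP G s w * Tcard G s w t := by
  have h1 : sigmaThr G s t w
      = Nat.card {p : G.Walk s t // p.length = G.dist s t ∧ w ∈ p.support} :=
    Nat.card_congr (Equiv.subtypeEquivRight (fun p =>
      ⟨fun h => ⟨h.2.1, h.2.2.1⟩,
       fun h => ⟨p.isPath_of_length_eq_dist h.1, h.1, h.2, hws, hwt⟩⟩))
  rw [h1, sigmaP_eq_card, Tcard, split_card G hconn s w t]

lemma Tcard_step (hconn : G.Connected) (s v t : V) (hvt : v ≠ t) :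
    Tcard G s v t = ∑ u : V, if G.Adj u v ∧ G.dist s u = G.dist s v + 1
      then Tcard G s u t else 0 := by
  classical
  rw [Tcard, step_card G hconn s v t hvt]
  refine Finset.sum_congr rfl fun u _ => ?_
  by_cases hc : G.Adj u v ∧ G.dist s u = G.dist s v + 1
  · rw [if_pos hc]
    exact Nat.card_congr (Equiv.subtypeEquivRight (fun q =>
      ⟨fun h => h.2, fun h => ⟨⟨hc.1.symm, hc.2⟩, h⟩⟩))
  · rw [if_neg hc]
    haveI : IsEmpty {q : G.Walk u t //
        (G.Adj v u ∧ G.dist s u = G.dist s v + 1) ∧ G.dist s u + q.length = G.dist s t} := by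
      constructor
      rintro ⟨q, ⟨h1, h2⟩, -⟩
      exact hc ⟨h1.symm, h2⟩
    exact Nat.card_of_isEmpty

lemma delta_aux (hconn : G.Connected) (s u : V) (hus : u ≠ s) :
    (∑ t, (sigmaThr G s t u : ℚ) / (sigmaP G s t : ℚ))
      = (sigmaP G s u : ℚ) * (∑ t, (Tcard G s u t : ℚ) / (sigmaP G s t : ℚ)) - 1 := by
  classical
  have hNne : ∀ t : V, (sigmaP G s t : ℚ) ≠ 0 := fun t =>
    Nat.cast_ne_zero.mpr (sigmaP_pos G hconn s t).ne'
  have key : ∀ t : V, (sigmaP G s u : ℚ) * ((Tcard G s u t : ℚ) / (sigmaP G s t : ℚ))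
      = (sigmaThr G s t u : ℚ) / (sigmaP G s t : ℚ) + (if t = u then 1 else 0) := by
    intro t
    by_cases ht : t = u
    · subst ht
      rw [if_pos rfl, sigmaThr_diag, Tcard_self]
      push_cast
      rw [mul_one_div, div_self (hNne _), zero_div, zero_add]
    · rw [if_neg ht, sigmaThr_eq_mul G hconn s u t hus (fun h => ht h.symm)]
      push_cast
      ring
  rw [Finset.mul_sum, Finset.sum_congr rfl fun t _ => key t, Finset.sum_add_distrib,
    Finset.sum_ite_eq' Finset.univ u (fun _ => (1 : ℚ))]
  simp

end BrandesAux

theorem brandes_recursion {V : Type} [Fintype V] (G : SimpleGraph V)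
    [DecidableRel G.Adj] (hconn : G.Connected) (s v : V) (hvs : v ≠ s) :
    (∑ t, (sigmaThr G s t v : ℚ) / (sigmaP G s t : ℚ))
      = ∑ u, if G.Adj u v ∧ G.dist s u = G.dist s v + 1 then
          ((sigmaP G s v : ℚ) / (sigmaP G s u : ℚ)) *
            (1 + ∑ t, (sigmaThr G s t u : ℚ) / (sigmaP G s t : ℚ))
        else 0 := by
  classical
  have hNne : ∀ t : V, (sigmaP G s t : ℚ) ≠ 0 := fun t =>
    Nat.cast_ne_zero.mpr (sigmaP_pos G hconn s t).ne'
  have step1 : ∀ t : V, (sigmaThr G s t v : ℚ) / (sigmaP G s t : ℚ)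
      = ∑ u : V, if G.Adj u v ∧ G.dist s u = G.dist s v + 1 then
          (sigmaP G s v : ℚ) * (Tcard G s u t : ℚ) / (sigmaP G s t : ℚ) else 0 := by
    intro t
    by_cases hvt : v = t
    · subst hvt
      rw [sigmaThr_diag]
      rw [Finset.sum_eq_zero]
      · simp
      · intro u _
        by_cases hc : G.Adj u v ∧ G.dist s u = G.dist s v + 1
        · rw [if_pos hc, Tcard_succ_zero G s u v hc.2]
          simp
        · rw [if_neg hc]
    · rw [sigmaThr_eq_mul G hconn s v t hvs hvt, Tcard_step G hconn s v t hvt]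
      push_cast
      rw [Finset.mul_sum, Finset.sum_div]
      refine Finset.sum_congr rfl fun u _ => ?_
      by_cases hc : G.Adj u v ∧ G.dist s u = G.dist s v + 1
      · rw [if_pos hc, if_pos hc]
      · rw [if_neg hc, if_neg hc]
        simp
  rw [Finset.sum_congr rfl fun t _ => step1 t, Finset.sum_comm]
  refine Finset.sum_congr rfl fun u _ => ?_
  by_cases hc : G.Adj u v ∧ G.dist s u = G.dist s v + 1
  · rw [Finset.sum_congr rfl fun t _ => if_pos hc, if_pos hc]
    have hus : u ≠ s := by
      intro h
      have h2 := hc.2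
      rw [h, SimpleGraph.dist_self] at h2
      omega
    have hd := delta_aux G hconn s u hus
    have hrw : (∑ t : V, (sigmaP G s v : ℚ) * (Tcard G s u t : ℚ) / (sigmaP G s t : ℚ))
        = (sigmaP G s v : ℚ) * ∑ t : V, (Tcard G s u t : ℚ) / (sigmaP G s t : ℚ) := by
      rw [Finset.mul_sum]
      exact Finset.sum_congr rfl fun t _ => by ring
    set S := ∑ t : V, (Tcard G s u t : ℚ) / (sigmaP G s t : ℚ) with hS
    rw [hrw, hd]
    field_simp
    rw [eq_div_iff (hNne u)]
    ring
  · rw [Finset.sum_congr rfl fun t _ => if_neg hc, if_neg hc]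
    exact Finset.sum_eq_zero fun t _ => rfl
end

section
/- Let u be an articulation vertex of connected graph G whose removal yields components with vertex sets C₁, …, C_k (k ≥ 2). Then the betweenness centrality of u decomposes as bc(u) = Σ_{i≠j} |C_i|·|C_j| + Σ_{i=1}^{k} bc_i(u), where the first sum counts ordered pairs of vertices in distinct components (for which δ_{st}(u) = 1), and bc_i(u) is the sum of pair dependencies δ_{st}(u) over ordered pairs s,t ∈ C_i. -/
open SimpleGraph

lemma reachable_induce_of_walk {V : Type} {G : SimpleGraph V} {s : Set V} :
    ∀ {a b : V} (p : G.Walk a b) (hs : ∀ x ∈ p.support, x ∈ s),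
    (G.induce s).Reachable ⟨a, hs a p.start_mem_support⟩ ⟨b, hs b p.end_mem_support⟩
  | _, _, SimpleGraph.Walk.nil, _ => Reachable.refl _
  | a, b, SimpleGraph.Walk.cons h q, hs =>
    Reachable.trans (SimpleGraph.Adj.reachable (by simpa using h))
      (reachable_induce_of_walk q (fun x hx => hs x (by simp [hx])))

open scoped Classical in
theorem articulation_bc_decomposition {V : Type} [Fintype V] (G : SimpleGraph V)
    (hconn : G.Connected) (u : V) (k : ℕ) (hk : 2 ≤ k)
    (C : Fin k → Set V)
    (hdisj : ∀ i j, i ≠ j → Disjoint (C i) (C j))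
    (hcover : (⋃ i, C i) = {w : V | w ≠ u})
    (hclosed : ∀ (i : Fin k) (a b : ↥{w : V | w ≠ u}),
      (G.induce {w : V | w ≠ u}).Reachable a b → ↑a ∈ C i → ↑b ∈ C i) :
    (∀ i j, i ≠ j → ∀ a ∈ C i, ∀ b ∈ C j,
      (sigmaThr G a b u : ℚ) / (sigmaP G a b : ℚ) = 1) ∧
    bc G u = (∑ i, ∑ j, if i ≠ j then
        (Nat.card (C i) : ℚ) * (Nat.card (C j) : ℚ) else 0)
      + ∑ i, ∑ a : V, ∑ b : V, if a ∈ C i ∧ b ∈ C i then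
          (sigmaThr G a b u : ℚ) / (sigmaP G a b : ℚ) else 0 := by
  classical
  haveI : G.LocallyFinite := fun v => Fintype.ofFinite _
  set δ : V → V → ℚ := fun s t => (sigmaThr G s t u : ℚ) / (sigmaP G s t : ℚ) with hδ
  have hCsub : ∀ i, C i ⊆ {w : V | w ≠ u} := fun i => hcover ▸ Set.subset_iUnion C i
  have huC : ∀ i, u ∉ C i := fun i h => (hCsub i h) rfl
  -- Part 1
  have part1 : ∀ i j, i ≠ j → ∀ a ∈ C i, ∀ b ∈ C j, δ a b = 1 := by
    intro i j hij a ha b hb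
    have hau : a ≠ u := hCsub i ha
    have hbu : b ≠ u := hCsub j hb
    have hmem : ∀ p : G.Walk a b, u ∈ p.support := by
      intro p
      by_contra hup
      have hs : ∀ x ∈ p.support, x ∈ {w : V | w ≠ u} := by
        intro x hx hxu
        exact hup (hxu ▸ hx)
      have hbC : b ∈ C i :=
        hclosed i ⟨a, hau⟩ ⟨b, hbu⟩ (reachable_induce_of_walk p hs) ha
      exact Set.disjoint_left.mp (hdisj i j hij) hbC hb
    have hst : sigmaThr G a b u = sigmaP G a b := by
      unfold sigmaThr sigmaP
      refine Nat.card_congr (Equiv.subtypeEquivRight fun p => ?_)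
      constructor
      · rintro ⟨h1, h2, _⟩; exact ⟨h1, h2⟩
      · rintro ⟨h1, h2⟩; exact ⟨h1, h2, hmem p, hau.symm, hbu.symm⟩
    have hne : Nonempty {p : G.Walk a b // p.IsPath ∧ p.length = G.dist a b} := by
      obtain ⟨p, hp, hlen⟩ := hconn.exists_path_of_dist a b
      exact ⟨⟨p, hp, hlen⟩⟩
    have hpos : 0 < sigmaP G a b := Nat.card_pos
    simp only [hδ, hst]
    rw [div_self]
    exact_mod_cast hpos.ne'
  refine ⟨part1, ?_⟩
  -- zero contributions from pairs involving u
  have hδu1 : ∀ t, δ u t = 0 := by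
    intro t
    have h0 : sigmaThr G u t u = 0 := by
      unfold sigmaThr
      have : IsEmpty {p : G.Walk u t // p.IsPath ∧ p.length = G.dist u t ∧
          u ∈ p.support ∧ u ≠ u ∧ u ≠ t} := ⟨fun x => x.2.2.2.2.1 rfl⟩
      exact Nat.card_of_isEmpty
    simp [hδ, h0]
  have hδu2 : ∀ s, δ s u = 0 := by
    intro s
    have h0 : sigmaThr G s u u = 0 := by
      unfold sigmaThr
      have : IsEmpty {p : G.Walk s u // p.IsPath ∧ p.length = G.dist s u ∧
          u ∈ p.support ∧ u ≠ s ∧ u ≠ u} := ⟨fun x => x.2.2.2.2.2 rfl⟩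
      exact Nat.card_of_isEmpty
    simp [hδ, h0]
  have hexists : ∀ w : V, w ≠ u → ∃ i, w ∈ C i := by
    intro w hw
    have : w ∈ ⋃ i, C i := hcover.symm ▸ hw
    exact Set.mem_iUnion.mp this
  have huniq : ∀ w : V, ∀ i i', w ∈ C i → w ∈ C i' → i = i' := by
    intro w i i' h h'
    by_contra hne
    exact Set.disjoint_left.mp (hdisj i i' hne) h h'
  -- decompose each δ s t over the components
  have key : ∀ s t : V, δ s t = ∑ i, ∑ j, if s ∈ C i ∧ t ∈ C j then δ s t else 0 := by
    intro s t
    by_cases hs : s = u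
    · subst hs
      rw [hδu1]
      exact (Finset.sum_eq_zero fun i _ => Finset.sum_eq_zero fun j _ => by
        simp [huC i]).symm
    by_cases ht : t = u
    · subst ht
      rw [hδu2]
      exact (Finset.sum_eq_zero fun i _ => Finset.sum_eq_zero fun j _ => by
        simp [huC j]).symm
    obtain ⟨i₀, hi₀⟩ := hexists s hs
    obtain ⟨j₀, hj₀⟩ := hexists t ht
    symm
    rw [Finset.sum_eq_single i₀]
    · rw [Finset.sum_eq_single j₀]
      · simp [hi₀, hj₀]
      · intro j _ hj
        have : t ∉ C j := fun h => hj (huniq t j j₀ h hj₀)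
        simp [this]
      · intro h; exact absurd (Finset.mem_univ j₀) h
    · intro i _ hi
      refine Finset.sum_eq_zero fun j _ => ?_
      have : s ∉ C i := fun h => hi (huniq s i i₀ h hi₀)
      simp [this]
    · intro h; exact absurd (Finset.mem_univ i₀) h
  set A : Fin k → Fin k → ℚ := fun i j => ∑ s : V, ∑ t : V,
      if s ∈ C i ∧ t ∈ C j then δ s t else 0 with hA
  have hbc : bc G u = ∑ i, ∑ j, A i j := by
    unfold bc
    calc (∑ s, ∑ t, δ s t)
        = ∑ s, ∑ t, ∑ i, ∑ j, if s ∈ C i ∧ t ∈ C j then δ s t else 0 := by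
          exact Finset.sum_congr rfl fun s _ => Finset.sum_congr rfl fun t _ => key s t
      _ = ∑ s, ∑ i, ∑ t, ∑ j, if s ∈ C i ∧ t ∈ C j then δ s t else 0 :=
          Finset.sum_congr rfl fun s _ => Finset.sum_comm
      _ = ∑ i, ∑ s, ∑ t, ∑ j, if s ∈ C i ∧ t ∈ C j then δ s t else 0 :=
          Finset.sum_comm
      _ = ∑ i, ∑ s, ∑ j, ∑ t, if s ∈ C i ∧ t ∈ C j then δ s t else 0 :=
          Finset.sum_congr rfl fun i _ => Finset.sum_congr rfl fun s _ =>
            Finset.sum_comm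
      _ = ∑ i, ∑ j, ∑ s, ∑ t, if s ∈ C i ∧ t ∈ C j then δ s t else 0 :=
          Finset.sum_congr rfl fun i _ => Finset.sum_comm
  -- counting: the cross terms
  have hS : ∀ i, (∑ s : V, if s ∈ C i then (1 : ℚ) else 0) = (Nat.card (C i) : ℚ) := by
    intro i
    have hcard : (Finset.filter (fun x => x ∈ C i) Finset.univ).card = Nat.card (C i) := by
      rw [Nat.card_coe_set_eq, Set.ncard_eq_toFinset_card']
      congr 1
      ext x
      simp
    rw [Finset.sum_boole, hcard]
  have hcross : ∀ i j, i ≠ j → A i j = (Nat.card (C i) : ℚ) * (Nat.card (C j) : ℚ) := by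
    intro i j hij
    have h1 : A i j = ∑ s : V, ∑ t : V, if s ∈ C i ∧ t ∈ C j then (1 : ℚ) else 0 := by
      refine Finset.sum_congr rfl fun s _ => Finset.sum_congr rfl fun t _ => ?_
      by_cases h : s ∈ C i ∧ t ∈ C j
      · simp only [if_pos h]
        exact part1 i j hij s h.1 t h.2
      · simp [h]
    rw [h1, ← hS i, ← hS j, Finset.sum_mul_sum]
    refine Finset.sum_congr rfl fun s _ => Finset.sum_congr rfl fun t _ => ?_
    by_cases h1 : s ∈ C i <;> by_cases h2 : t ∈ C j <;> simp [h1, h2]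
  rw [hbc]
  have hsplit : ∀ i j, A i j = (if i ≠ j then (Nat.card (C i) : ℚ) * (Nat.card (C j) : ℚ)
      else 0) + (if i = j then A i j else 0) := by
    intro i j
    by_cases h : i = j
    · simp [h]
    · simp [h, hcross i j h]
  calc (∑ i, ∑ j, A i j)
      = ∑ i, ∑ j, ((if i ≠ j then (Nat.card (C i) : ℚ) * (Nat.card (C j) : ℚ) else 0)
          + (if i = j then A i j else 0)) :=
        Finset.sum_congr rfl fun i _ => Finset.sum_congr rfl fun j _ => hsplit i j
    _ = (∑ i, ∑ j, if i ≠ j then (Nat.card (C i) : ℚ) * (Nat.card (C j) : ℚ) else 0)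
        + ∑ i, ∑ j, (if i = j then A i j else 0) := by
        rw [← Finset.sum_add_distrib]
        exact Finset.sum_congr rfl fun i _ => Finset.sum_add_distrib
    _ = (∑ i, ∑ j, if i ≠ j then (Nat.card (C i) : ℚ) * (Nat.card (C j) : ℚ) else 0)
        + ∑ i, A i i := by
        congr 1
        refine Finset.sum_congr rfl fun i _ => ?_
        simp
    _ = _ := rfl
end

section
/- Let u be an articulation vertex of a connected graph G separating components C₁,…,C_k, let v ∈ C_i with v ≠ u, and let s ∈ C_j for j ≠ i. Then the dependency of s on v equals the dependency of u on v computed within the subgraph induced by C_i ∪ {u}: δ_s(v) = δ_u(v), where dependencies are sums of pair dependencies over all targets in V. -/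
open SimpleGraph

lemma walk_append_inj {V : Type} {G : SimpleGraph V} :
    ∀ {a b c : V} (q₁ r₁ : G.Walk a b) (q₂ r₂ : G.Walk b c),
      q₁.length = r₁.length → q₁.append q₂ = r₁.append r₂ → q₁ = r₁ ∧ q₂ = r₂
  | _, _, _, Walk.nil, Walk.nil, q₂, r₂, _, h => ⟨rfl, by simpa using h⟩
  | _, _, _, Walk.nil, Walk.cons _ _, _, _, hl, _ => by simp at hl
  | _, _, _, Walk.cons _ _, Walk.nil, _, _, hl, _ => by simp at hl
  | _, _, _, Walk.cons h₁ p₁, Walk.cons h₂ p₂, q₂, r₂, hl, he => by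
      rw [Walk.cons_append, Walk.cons_append] at he
      injection he with _ hv _ hp
      subst hv
      rw [heq_eq_eq] at hp
      obtain ⟨rfl, rfl⟩ := walk_append_inj p₁ p₂ q₂ r₂ (by simpa using hl) hp
      exact ⟨rfl, rfl⟩

lemma walk_avoid_reachable {V : Type} {G : SimpleGraph V} {u : V} :
    ∀ {a b : V} (p : G.Walk a b), u ∉ p.support → ∀ (ha : a ≠ u) (hb : b ≠ u),
      (G.induce {w : V | w ≠ u}).Reachable ⟨a, ha⟩ ⟨b, hb⟩ := by
  intro a b p
  induction p with
  | nil => intro _ ha hb; exact Reachable.refl _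
  | @cons a c b h p ih =>
      intro hu ha hb
      have hcu : c ≠ u := by
        rintro rfl
        exact hu (by rw [Walk.support_cons]; exact List.mem_cons_of_mem _ p.start_mem_support)
      have hadj : (G.induce {w : V | w ≠ u}).Adj ⟨a, ha⟩ ⟨c, hcu⟩ := by
        simpa using h
      exact hadj.reachable.trans
        (ih (fun h' => hu (by rw [Walk.support_cons]; exact List.mem_cons_of_mem _ h')) hcu hb)

theorem dependency_across_articulation {V : Type} [Fintype V] (G : SimpleGraph V)
    (hconn : G.Connected) (u : V) (Ci Cj : Set V)
    (hdisj : Disjoint Ci Cj) (huCi : u ∉ Ci) (huCj : u ∉ Cj)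
    (hclosedi : ∀ (a b : ↥{w : V | w ≠ u}),
      (G.induce {w : V | w ≠ u}).Reachable a b → ↑a ∈ Ci → ↑b ∈ Ci)
    (hclosedj : ∀ (a b : ↥{w : V | w ≠ u}),
      (G.induce {w : V | w ≠ u}).Reachable a b → ↑a ∈ Cj → ↑b ∈ Cj)
    (v : V) (hv : v ∈ Ci) (s : V) (hs : s ∈ Cj) :
    (∑ t, (sigmaThr G s t v : ℚ) / (sigmaP G s t : ℚ))
      = ∑ t, (sigmaThr G u t v : ℚ) / (sigmaP G u t : ℚ) := by
  classical
  have hsCi : s ∉ Ci := fun h => Set.disjoint_left.mp hdisj h hs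
  have hvu : v ≠ u := fun h => huCi (h ▸ hv)
  have hsu : s ≠ u := fun h => huCj (h ▸ hs)
  have hvs : v ≠ s := fun h => hsCi (h ▸ hv)
  -- closure under walks avoiding u
  have memCi : ∀ {a b : V} (p : G.Walk a b), u ∉ p.support → a ∈ Ci → b ∈ Ci := by
    intro a b p hup ha
    have hau : a ≠ u := fun h => hup (h ▸ p.start_mem_support)
    have hbu : b ≠ u := fun h => hup (h ▸ p.end_mem_support)
    exact hclosedi ⟨a, hau⟩ ⟨b, hbu⟩ (walk_avoid_reachable p hup hau hbu) ha
  have memCi' : ∀ {a b : V} (p : G.Walk a b), u ∉ p.support → b ∈ Ci → a ∈ Ci := by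
    intro a b p hup hb
    exact memCi p.reverse (by rwa [Walk.support_reverse, List.mem_reverse]) hb
  have u_mem : ∀ {a b : V} (p : G.Walk a b), a ∉ Ci → b ∈ Ci → u ∈ p.support := by
    intro a b p ha hb
    by_contra hup
    exact ha (memCi' p hup hb)
  -- support of a path ending at u from outside Ci avoids Ci
  have sup_to_u : ∀ {a : V}, a ∉ Ci → ∀ (p : G.Walk a u), p.IsPath →
      ∀ x ∈ p.support, x ∉ Ci := by
    intro a ha p hp x hx hxCi
    have hnodup := hp.support_nodup
    have hsplit : p.support
        = (p.takeUntil x hx).support ++ (p.dropUntil x hx).support.tail := by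
      conv_lhs => rw [← Walk.take_spec p hx]
      exact Walk.support_append _ _
    rw [hsplit, List.nodup_append] at hnodup
    have hxu : x ≠ u := fun h => huCi (h ▸ hxCi)
    have hu1 : u ∉ (p.takeUntil x hx).support := by
      intro hu1
      have hu2 : u ∈ (p.dropUntil x hx).support.tail := by
        have h3 := (p.dropUntil x hx).end_mem_support
        rw [Walk.support_eq_cons] at h3
        rcases List.mem_cons.mp h3 with h3 | h3
        · exact absurd h3.symm hxu
        · exact h3
      exact hnodup.2.2 _ hu1 _ hu2 rfl
    exact ha (memCi' (p.takeUntil x hx) hu1 hxCi)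
  -- support of a path from u into Ci stays in Ci (except u)
  have sup_from_u : ∀ {b : V}, b ∈ Ci → ∀ (p : G.Walk u b), p.IsPath →
      ∀ x ∈ p.support, x ≠ u → x ∈ Ci := by
    intro b hb p hp x hx hxu
    have hnodup := hp.support_nodup
    have hsplit : p.support
        = (p.takeUntil x hx).support ++ (p.dropUntil x hx).support.tail := by
      conv_lhs => rw [← Walk.take_spec p hx]
      exact Walk.support_append _ _
    rw [hsplit, List.nodup_append] at hnodup
    have hu1 : u ∉ (p.dropUntil x hx).support := by
      intro hu1
      rw [Walk.support_eq_cons] at hu1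
      rcases List.mem_cons.mp hu1 with h1 | h1
      · exact hxu h1.symm
      · exact hnodup.2.2 _ (p.takeUntil x hx).start_mem_support _ h1 rfl
    exact memCi' (p.dropUntil x hx) hu1 hb
  -- zero lemmas for t ∉ Ci
  have z1 : ∀ t : V, t ∉ Ci → sigmaThr G s t v = 0 := by
    intro t ht
    simp only [sigmaThr]
    rw [Nat.card_eq_zero]
    left
    constructor
    rintro ⟨p, hp, hlen, hvp, hvs2, hvt⟩
    have h1 : u ∈ (p.takeUntil v hvp).support := u_mem _ hsCi hv
    have h2 : u ∈ (p.dropUntil v hvp).support := by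
      by_cases htu : t = u
      · subst htu; exact (p.dropUntil v hvp).end_mem_support
      · have := u_mem (p.dropUntil v hvp).reverse ht hv
        rwa [Walk.support_reverse, List.mem_reverse] at this
    have hnodup := hp.support_nodup
    have hsplit : p.support
        = (p.takeUntil v hvp).support ++ (p.dropUntil v hvp).support.tail := by
      conv_lhs => rw [← Walk.take_spec p hvp]
      exact Walk.support_append _ _
    rw [hsplit, List.nodup_append] at hnodup
    have h2' : u ∈ (p.dropUntil v hvp).support.tail := by
      rw [Walk.support_eq_cons] at h2
      rcases List.mem_cons.mp h2 with h2 | h2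
      · exact absurd h2.symm hvu
      · exact h2
    exact hnodup.2.2 _ h1 _ h2' rfl
  have z2 : ∀ t : V, t ∉ Ci → sigmaThr G u t v = 0 := by
    intro t ht
    simp only [sigmaThr]
    rw [Nat.card_eq_zero]
    left
    constructor
    rintro ⟨p, hp, hlen, hvp, hvu2, hvt⟩
    by_cases htu : t = u
    · subst htu
      rw [Walk.isPath_iff_eq_nil] at hp
      subst hp
      simp at hvp
      exact hvu2 hvp
    · have hdrop_u : u ∉ (p.dropUntil v hvp).support := by
        intro hu1
        rw [Walk.support_eq_cons] at hu1
        rcases List.mem_cons.mp hu1 with h1 | h1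
        · exact hvu h1.symm
        · have hnodup := hp.support_nodup
          have hsplit : p.support
              = (p.takeUntil v hvp).support ++ (p.dropUntil v hvp).support.tail := by
            conv_lhs => rw [← Walk.take_spec p hvp]
            exact Walk.support_append _ _
          rw [hsplit, List.nodup_append] at hnodup
          exact hnodup.2.2 _ (p.takeUntil v hvp).start_mem_support _ h1 rfl
      exact ht (memCi (p.dropUntil v hvp) hdrop_u hv)
  -- finiteness
  have finW : ∀ (a b : V) (P : G.Walk a b → Prop),
      Finite {p : G.Walk a b // p.IsPath ∧ P p} := by
    intro a b P
    have : Finite {p : G.Walk a b // p.IsPath} := by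
      have : Finite {p : G.Walk a b | p.length < Fintype.card V} := by
        rw [← G.coe_finsetWalkLengthLT_eq]
        exact (G.finsetWalkLengthLT (Fintype.card V) a b).finite_toSet
      refine Finite.of_injective
        (fun x => (⟨x.1, x.2.length_lt⟩ : {p : G.Walk a b | p.length < Fintype.card V})) ?_
      intro x y h
      simp only [Subtype.mk.injEq] at h
      exact Subtype.ext h
    refine Finite.of_injective
      (fun x => (⟨x.1, x.2.1⟩ : {p : G.Walk a b // p.IsPath})) ?_
    intro x y h
    simp only [Subtype.mk.injEq] at h
    exact Subtype.ext h
  have fin1 : Finite {p : G.Walk s u // p.IsPath ∧ p.length = G.dist s u} :=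
    finW s u _
  -- positivity
  have hpos : 0 < sigmaP G s u := by
    obtain ⟨p, hp, hl⟩ := hconn.exists_path_of_dist s u
    have : Nonempty {p : G.Walk s u // p.IsPath ∧ p.length = G.dist s u} := ⟨⟨p, hp, hl⟩⟩
    simp only [sigmaP]
    exact Nat.card_pos
  -- key multiplicative decomposition for t ∈ Ci
  have key : ∀ t : V, t ∈ Ci →
      sigmaP G s t = sigmaP G s u * sigmaP G u t ∧
      sigmaThr G s t v = sigmaP G s u * sigmaThr G u t v := by
    intro t htCi
    have htu : t ≠ u := fun h => huCi (h ▸ htCi)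
    have hvt' : v ≠ s := hvs
    have hdist : G.dist s t = G.dist s u + G.dist u t := by
      refine le_antisymm hconn.dist_triangle ?_
      obtain ⟨p, hp, hl⟩ := hconn.exists_path_of_dist s t
      have hu : u ∈ p.support := u_mem p hsCi htCi
      calc G.dist s u + G.dist u t
          ≤ (p.takeUntil u hu).length + (p.dropUntil u hu).length :=
            Nat.add_le_add (dist_le _) (dist_le _)
        _ = p.length := by rw [← Walk.length_append, Walk.take_spec]
        _ = G.dist s t := hl
    have split_facts : ∀ (p : G.Walk s t), p.length = G.dist s t →
        ∀ (hu : u ∈ p.support),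
        (p.takeUntil u hu).length = G.dist s u ∧
        (p.dropUntil u hu).length = G.dist u t := by
      intro p hl hu
      have h1 : G.dist s u ≤ (p.takeUntil u hu).length := dist_le _
      have h2 : G.dist u t ≤ (p.dropUntil u hu).length := dist_le _
      have h3 : (p.takeUntil u hu).length + (p.dropUntil u hu).length = p.length := by
        rw [← Walk.length_append, Walk.take_spec]
      omega
    have append_path : ∀ (q₁ : G.Walk s u) (q₂ : G.Walk u t),
        q₁.IsPath → q₂.IsPath → (q₁.append q₂).IsPath := by
      intro q₁ q₂ h₁ h₂
      rw [Walk.isPath_def, Walk.support_append, List.nodup_append]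
      refine ⟨h₁.support_nodup, ?_, ?_⟩
      · have h3 := h₂.support_nodup
        rw [Walk.support_eq_cons] at h3
        exact h3.of_cons
      · intro x hx1 y hx2 hxy; subst hxy
        have hxCi : x ∉ Ci := sup_to_u hsCi q₁ h₁ x hx1
        have hxu : x ≠ u := by
          intro h; subst h
          have h3 := h₂.support_nodup
          rw [Walk.support_eq_cons] at h3
          exact (List.nodup_cons.mp h3).1 hx2
        exact hxCi (sup_from_u htCi q₂ h₂ x
          (by rw [Walk.support_eq_cons]; exact List.mem_cons_of_mem _ hx2) hxu)
    have append_len : ∀ (q₁ : G.Walk s u) (q₂ : G.Walk u t),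
        q₁.length = G.dist s u → q₂.length = G.dist u t →
        (q₁.append q₂).length = G.dist s t := by
      intro q₁ q₂ h1 h2
      rw [Walk.length_append, hdist, h1, h2]
    constructor
    · -- sigmaP multiplicative
      simp only [sigmaP]
      rw [← Nat.card_prod]
      apply Nat.card_congr
      refine
        { toFun := fun p =>
            (⟨p.1.takeUntil u (u_mem p.1 hsCi htCi),
              p.2.1.takeUntil _, (split_facts p.1 p.2.2 _).1⟩,
             ⟨p.1.dropUntil u (u_mem p.1 hsCi htCi),
              p.2.1.dropUntil _, (split_facts p.1 p.2.2 _).2⟩)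
          invFun := fun q =>
            ⟨q.1.1.append q.2.1, append_path _ _ q.1.2.1 q.2.2.1,
             append_len _ _ q.1.2.2 q.2.2.2⟩
          left_inv := ?_
          right_inv := ?_ }
      · rintro ⟨p, hp, hl⟩
        exact Subtype.ext (Walk.take_spec p _)
      · rintro ⟨⟨q₁, hq₁, hl₁⟩, ⟨q₂, hq₂, hl₂⟩⟩
        have hP : (q₁.append q₂).IsPath := append_path _ _ hq₁ hq₂
        have hL : (q₁.append q₂).length = G.dist s t := append_len _ _ hl₁ hl₂
        have hu : u ∈ (q₁.append q₂).support := u_mem _ hsCi htCi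
        obtain ⟨e1, e2⟩ := walk_append_inj ((q₁.append q₂).takeUntil u hu) q₁
          ((q₁.append q₂).dropUntil u hu) q₂
          (by rw [(split_facts _ hL hu).1, hl₁]) (by rw [Walk.take_spec])
        exact Prod.ext (Subtype.ext e1) (Subtype.ext e2)
    · -- sigmaThr decomposition
      simp only [sigmaThr, sigmaP]
      rw [← Nat.card_prod]
      apply Nat.card_congr
      have vmem : ∀ (p : G.Walk s t), p.IsPath → v ∈ p.support →
          ∀ (hu : u ∈ p.support), v ∈ (p.dropUntil u hu).support := by
        intro p hp hvp hu
        have hsplit : p.support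
            = (p.takeUntil u hu).support ++ (p.dropUntil u hu).support.tail := by
          conv_lhs => rw [← Walk.take_spec p hu]
          exact Walk.support_append _ _
        rw [hsplit, List.mem_append] at hvp
        rcases hvp with h1 | h1
        · exact absurd hv (sup_to_u hsCi (p.takeUntil u hu) (hp.takeUntil _) v h1)
        · exact List.mem_of_mem_tail h1
      refine
        { toFun := fun p =>
            (⟨p.1.takeUntil u (u_mem p.1 hsCi htCi),
              p.2.1.takeUntil _, (split_facts p.1 p.2.2.1 _).1⟩,
             ⟨p.1.dropUntil u (u_mem p.1 hsCi htCi),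
              p.2.1.dropUntil _, (split_facts p.1 p.2.2.1 _).2,
              vmem p.1 p.2.1 p.2.2.2.1 _, hvu, p.2.2.2.2.2⟩)
          invFun := fun q =>
            ⟨q.1.1.append q.2.1, append_path _ _ q.1.2.1 q.2.2.1,
             append_len _ _ q.1.2.2 q.2.2.2.1,
             (Walk.mem_support_append_iff _ _).mpr (Or.inr q.2.2.2.2.1),
             hvs, q.2.2.2.2.2.2⟩
          left_inv := ?_
          right_inv := ?_ }
      · rintro ⟨p, hp, hl, hvp, h1, h2⟩
        exact Subtype.ext (Walk.take_spec p _)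
      · rintro ⟨⟨q₁, hq₁, hl₁⟩, ⟨q₂, hq₂, hl₂, hv₂, h1, h2⟩⟩
        have hP : (q₁.append q₂).IsPath := append_path _ _ hq₁ hq₂
        have hL : (q₁.append q₂).length = G.dist s t := append_len _ _ hl₁ hl₂
        have hu : u ∈ (q₁.append q₂).support := u_mem _ hsCi htCi
        obtain ⟨e1, e2⟩ := walk_append_inj ((q₁.append q₂).takeUntil u hu) q₁
          ((q₁.append q₂).dropUntil u hu) q₂
          (by rw [(split_facts _ hL hu).1, hl₁]) (by rw [Walk.take_spec])
        exact Prod.ext (Subtype.ext e1) (Subtype.ext e2)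
  -- put it together
  apply Finset.sum_congr rfl
  intro t _
  by_cases ht : t ∈ Ci
  · obtain ⟨e1, e2⟩ := key t ht
    rw [e1, e2]
    push_cast
    rw [mul_div_mul_left]
    exact_mod_cast hpos.ne'
  · rw [z1 t ht, z2 t ht]
    simp
end
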